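/- The Appell subgroup A = {(b | g; t, t, …, t)} of the multiple almost-Riordan group is a normal subgroup, the Lagrange subgroup L = {(1 | 1; f₁, …, f_ℓ)} is a subgroup, and the multiple almost-Riordan group is the (internal) semidirect product A ⋊ L: every element factors uniquely as an element of A times an element of L, and A ∩ L is trivial. -/

import Mathlib

open PowerSeries

/-- Composition `g ∘ f` of formal power series (meaningful when `f` has zero
constant term). -/
noncomputable def pcomp {K : Type*} [Field K] (g f : PowerSeries K) : PowerSeries K :=
  PowerSeries.mk fun n => ∑ k ∈ Finset.range (n + 1), coeff k g * coeff n (f ^ k)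

/-- `f/t`: the coefficient shift of a power series. -/
noncomputable def pdivX {K : Type*} [Field K] (f : PowerSeries K) : PowerSeries K :=
  PowerSeries.mk fun n => coeff (n + 1) f

/-- `g ∈ K[[t^ℓ]]`. -/
def InTl {K : Type*} [Field K] (ℓ : ℕ) (g : PowerSeries K) : Prop :=
  ∀ n : ℕ, ¬ ℓ ∣ n → coeff n g = 0

/-- A normalized multiplier function: `f ∈ t·K[[t^ℓ]]` with `f'(0) = 1`. -/
def IsMultN {K : Type*} [Field K] (ℓ : ℕ) (f : PowerSeries K) : Prop :=
  constantCoeff f = 0 ∧ (∀ n : ℕ, n % ℓ ≠ 1 % ℓ → coeff n f = 0) ∧ coeff 1 f = 1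


/-- The underlying data of a multiple almost-Riordan array `(b | g; f₁,…,f_ℓ, h)`. -/
abbrev MaR (K : Type*) [Field K] (m : ℕ) :=
  PowerSeries K × PowerSeries K × (Fin (m + 1) → PowerSeries K) × PowerSeries K

/-- A normalized multiple almost-Riordan array `(b | g; f₁, …, f_ℓ)` (with
`ℓ = m + 1`, constant terms of `b, g` equal to `1`), together with its chosen
normalized `ℓ`-th root `h` of `f₁⋯f_ℓ`. -/
def IsMaRN {K : Type*} [Field K] (m : ℕ)
    (p : MaR K m) : Prop :=
  InTl (m + 1) p.1 ∧ constantCoeff p.1 = 1 ∧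
    InTl (m + 1) p.2.1 ∧ constantCoeff p.2.1 = 1 ∧
    (∀ j, IsMultN (m + 1) (p.2.2.1 j)) ∧ IsMultN (m + 1) p.2.2.2 ∧
    p.2.2.2 ^ (m + 1) = ∏ j, p.2.2.1 j

/-- The multiple almost-Riordan product. -/
noncomputable def maMul {K : Type*} [Field K] {m : ℕ}
    (p q : MaR K m) : MaR K m :=
  (C (constantCoeff q.1) * p.1 +
      p.2.1 * (pdivX (p.2.2.1 (Fin.last m)))⁻¹ *
        (pcomp q.1 p.2.2.2 - C (constantCoeff q.1)),
    p.2.1 * pcomp q.2.1 p.2.2.2,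
    fun j => pdivX (p.2.2.1 j) * (pdivX p.2.2.2)⁻¹ * pcomp (q.2.2.1 j) p.2.2.2,
    pcomp q.2.2.2 p.2.2.2)

/-- The Appell part: `(b | g; t, …, t)`. -/
def IsA {K : Type*} [Field K] (m : ℕ)
    (p : MaR K m) : Prop :=
  IsMaRN m p ∧ (∀ j, p.2.2.1 j = X) ∧ p.2.2.2 = X

/-- The Lagrange part: `(1 | 1; f₁, …, f_ℓ)`. -/
def IsL {K : Type*} [Field K] (m : ℕ)
    (p : MaR K m) : Prop :=
  IsMaRN m p ∧ p.1 = 1 ∧ p.2.1 = 1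


set_option maxHeartbeats 1600000

section AuxLemmas

variable {K : Type*} [Field K]

lemma coeff_pcomp (g f : PowerSeries K) (n : ℕ) :
    coeff n (pcomp g f) = ∑ k ∈ Finset.range (n + 1), coeff k g * coeff n (f ^ k) := by
  simp [pcomp]

lemma coeff_pdivX (f : PowerSeries K) (n : ℕ) : coeff n (pdivX f) = coeff (n + 1) f := by
  simp [pdivX]

lemma constantCoeff_pdivX (f : PowerSeries K) : constantCoeff (pdivX f) = coeff 1 f := by
  rw [← coeff_zero_eq_constantCoeff, coeff_pdivX]

lemma X_mul_pdivX {f : PowerSeries K} (h0 : constantCoeff f = 0) : X * pdivX f = f := by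
  ext n
  cases n with
  | zero => simp [h0]
  | succ n => rw [coeff_succ_X_mul, coeff_pdivX]

lemma pdivX_X_mul (f : PowerSeries K) : pdivX (X * f) = f := by
  ext n
  rw [coeff_pdivX, coeff_succ_X_mul]

lemma pdivX_X : pdivX (X : PowerSeries K) = 1 := by
  have := pdivX_X_mul (1 : PowerSeries K)
  rwa [mul_one] at this

lemma coeff_pow_eq_zero {f : PowerSeries K} (h0 : constantCoeff f = 0) {n k : ℕ}
    (h : n < k) : coeff n (f ^ k) = 0 := by
  have : f ^ k = X ^ k * (pdivX f) ^ k := by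
    rw [← mul_pow, X_mul_pdivX h0]
  rw [this, coeff_mul]
  apply Finset.sum_eq_zero
  rintro ⟨i, j⟩ hij
  rw [Finset.HasAntidiagonal.mem_antidiagonal] at hij
  rw [coeff_X_pow, if_neg, zero_mul]
  omega

lemma constantCoeff_pow_eq_zero {f : PowerSeries K} (h0 : constantCoeff f = 0) {k : ℕ}
    (hk : 0 < k) : constantCoeff (f ^ k) = 0 := by
  rw [map_pow, h0, zero_pow hk.ne']

lemma pcomp_X (g : PowerSeries K) : pcomp g X = g := by
  ext n
  rw [coeff_pcomp]
  simp only [coeff_X_pow]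
  rw [Finset.sum_eq_single n]
  · simp
  · intro k _ hk; simp [Ne.symm hk]
  · intro h; simp at h

lemma X_pcomp {f : PowerSeries K} (h0 : constantCoeff f = 0) : pcomp X f = f := by
  ext n
  rw [coeff_pcomp]
  cases n with
  | zero => simp [coeff_zero_eq_constantCoeff, h0]
  | succ n =>
    rw [Finset.sum_eq_single 1]
    · simp
    · intro k hk hk1
      rcases eq_or_ne k 0 with rfl | h
      · simp
      · rw [coeff_X, if_neg (by omega), zero_mul]
    · intro h; simp at h

lemma C_pcomp (a : K) (f : PowerSeries K) : pcomp (C a) f = C a := by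
  ext n
  rw [coeff_pcomp, Finset.sum_eq_single 0]
  · simp [coeff_C]
  · intro k _ hk; simp [coeff_C, hk]
  · simp

lemma one_pcomp (f : PowerSeries K) : pcomp 1 f = 1 := by
  have := C_pcomp (1 : K) f
  rwa [map_one] at this

lemma pcomp_add (a b f : PowerSeries K) : pcomp (a + b) f = pcomp a f + pcomp b f := by
  ext n
  simp [coeff_pcomp, add_mul, Finset.sum_add_distrib]

lemma constantCoeff_pcomp (g f : PowerSeries K) :
    constantCoeff (pcomp g f) = constantCoeff g := by
  rw [← coeff_zero_eq_constantCoeff, coeff_pcomp]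
  simp

lemma coeff_one_pcomp {g f : PowerSeries K} (h0 : constantCoeff f = 0) :
    coeff 1 (pcomp g f) = coeff 1 g * coeff 1 f := by
  rw [coeff_pcomp]
  rw [Finset.sum_range_succ, Finset.sum_range_one]
  simp [coeff_one]

lemma coeff_one_mul' (a b : PowerSeries K) :
    coeff 1 (a * b) =
      constantCoeff a * coeff 1 b + coeff 1 a * constantCoeff b := by
  rw [coeff_mul, Finset.Nat.sum_antidiagonal_eq_sum_range_succ_mk,
    Finset.sum_range_succ, Finset.sum_range_one]
  simp [coeff_zero_eq_constantCoeff]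

lemma coeff_pcomp_trunc {f : PowerSeries K} (h0 : constantCoeff f = 0)
    (g : PowerSeries K) {n N : ℕ} (hN : n < N) :
    coeff n (pcomp g f) =
      coeff n (∑ k ∈ Finset.range N, C (coeff k g) * f ^ k) := by
  rw [coeff_pcomp, map_sum]
  simp only [coeff_C_mul]
  apply Finset.sum_subset
  · intro k hk
    rw [Finset.mem_range] at *; omega
  · intro k _ hk
    rw [Finset.mem_range, not_lt] at hk
    rw [coeff_pow_eq_zero h0 (by omega), mul_zero]

lemma coeff_mul_congr {A A' B B' : PowerSeries K} {n : ℕ}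
    (hA : ∀ i ≤ n, coeff i A = coeff i A') (hB : ∀ i ≤ n, coeff i B = coeff i B') :
    coeff n (A * B) = coeff n (A' * B') := by
  rw [coeff_mul, coeff_mul]
  apply Finset.sum_congr rfl
  rintro ⟨i, j⟩ hij
  rw [Finset.HasAntidiagonal.mem_antidiagonal] at hij
  rw [hA i (by omega), hB j (by omega)]

lemma pcomp_mul {f : PowerSeries K} (h0 : constantCoeff f = 0) (a b : PowerSeries K) :
    pcomp (a * b) f = pcomp a f * pcomp b f := by
  ext n
  set F : ℕ × ℕ → K := fun p => coeff p.1 a * coeff p.2 b * coeff n (f ^ (p.1 + p.2))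
    with hF
  have hFz : ∀ p : ℕ × ℕ, n < p.1 + p.2 → F p = 0 := by
    intro p hp
    simp [hF, coeff_pow_eq_zero h0 hp]
  have lhs : coeff n (pcomp (a * b) f)
      = ∑ k ∈ Finset.range (2 * n + 1), ∑ p ∈ Finset.HasAntidiagonal.antidiagonal k, F p := by
    rw [coeff_pcomp_trunc h0 _ (show n < 2 * n + 1 by omega), map_sum]
    apply Finset.sum_congr rfl
    intro k _
    rw [coeff_C_mul, coeff_mul, Finset.sum_mul]
    apply Finset.sum_congr rfl
    rintro ⟨i, j⟩ hij
    rw [Finset.HasAntidiagonal.mem_antidiagonal] at hij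
    simp only [hF]; rw [hij]
  have step1 : ∑ k ∈ Finset.range (2 * n + 1), ∑ p ∈ Finset.HasAntidiagonal.antidiagonal k, F p
      = ∑ p ∈ Finset.range (2 * n + 1) ×ˢ Finset.range (2 * n + 1), F p := by
    have hanti : ∀ k ∈ Finset.range (2 * n + 1), Finset.HasAntidiagonal.antidiagonal k =
        (Finset.range (2 * n + 1) ×ˢ Finset.range (2 * n + 1)).filter
          (fun p => p.1 + p.2 = k) := by
      intro k hk
      rw [Finset.mem_range] at hk
      ext ⟨i, j⟩
      simp only [Finset.HasAntidiagonal.mem_antidiagonal, Finset.mem_filter, Finset.mem_product,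
        Finset.mem_range]
      omega
    rw [Finset.sum_congr rfl fun k hk => by rw [hanti k hk, Finset.sum_filter]]
    rw [Finset.sum_comm]
    apply Finset.sum_congr rfl
    intro p _
    rw [Finset.sum_ite_eq (Finset.range (2 * n + 1)) (p.1 + p.2) (fun _ => F p)]
    by_cases h : p.1 + p.2 ∈ Finset.range (2 * n + 1)
    · rw [if_pos h]
    · rw [if_neg h, hFz p (by rw [Finset.mem_range] at h; omega)]
  have rhs : coeff n (pcomp a f * pcomp b f)
      = ∑ p ∈ Finset.range (n + 1) ×ˢ Finset.range (n + 1), F p := by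
    have := coeff_mul_congr (n := n)
      (fun i hi => coeff_pcomp_trunc h0 a (N := n + 1) (by omega))
      (fun i hi => coeff_pcomp_trunc h0 b (N := n + 1) (by omega))
    rw [this, Finset.sum_mul_sum, map_sum, Finset.sum_product]
    apply Finset.sum_congr rfl
    intro i _
    rw [map_sum]
    apply Finset.sum_congr rfl
    intro j _
    rw [mul_mul_mul_comm, ← map_mul, ← pow_add, coeff_C_mul]
  rw [lhs, step1, rhs]
  symm
  apply Finset.sum_subset
  · intro p hp
    simp only [Finset.mem_product, Finset.mem_range] at *
    omega
  · intro p hp hnp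
    apply hFz
    simp only [Finset.mem_product, Finset.mem_range] at hp hnp
    omega

/-- `pcomp · f` as a ring hom, for `f` with zero constant term. -/
noncomputable def pcompHom (f : PowerSeries K) (h0 : constantCoeff f = 0) :
    PowerSeries K →+* PowerSeries K where
  toFun g := pcomp g f
  map_one' := one_pcomp f
  map_mul' a b := pcomp_mul h0 a b
  map_zero' := by
    ext n; rw [coeff_pcomp]; simp
  map_add' a b := pcomp_add a b f

lemma pcomp_pow {f : PowerSeries K} (h0 : constantCoeff f = 0) (a : PowerSeries K) (k : ℕ) :
    pcomp (a ^ k) f = (pcomp a f) ^ k :=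
  map_pow (pcompHom f h0) a k

lemma pcomp_prod {f : PowerSeries K} (h0 : constantCoeff f = 0) {ι : Type*}
    (s : Finset ι) (v : ι → PowerSeries K) :
    pcomp (∏ j ∈ s, v j) f = ∏ j ∈ s, pcomp (v j) f :=
  map_prod (pcompHom f h0) v s

lemma pcomp_sub {f : PowerSeries K} (a b : PowerSeries K) (h0 : constantCoeff f = 0) :
    pcomp (a - b) f = pcomp a f - pcomp b f :=
  map_sub (pcompHom f h0) a b

lemma pcomp_inv {f : PowerSeries K} (h0 : constantCoeff f = 0) {a : PowerSeries K}
    (ha : constantCoeff a ≠ 0) : pcomp a⁻¹ f = (pcomp a f)⁻¹ := by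
  rw [PowerSeries.eq_inv_iff_mul_eq_one (by rwa [constantCoeff_pcomp]),
    ← pcomp_mul h0, PowerSeries.inv_mul_cancel a ha, one_pcomp]

lemma pcomp_assoc {a b c : PowerSeries K} (hb : constantCoeff b = 0)
    (hc : constantCoeff c = 0) : pcomp (pcomp a b) c = pcomp a (pcomp b c) := by
  ext n
  rw [coeff_pcomp, coeff_pcomp]
  have step : ∀ k ∈ Finset.range (n + 1), coeff k (pcomp a b) * coeff n (c ^ k)
      = ∑ i ∈ Finset.range (n + 1), coeff i a * coeff k (b ^ i) * coeff n (c ^ k) := by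
    intro k hk
    rw [coeff_pcomp, Finset.sum_mul]
    apply Finset.sum_subset
    · intro i hi; rw [Finset.mem_range] at hi hk ⊢; omega
    · intro i _ hi
      rw [Finset.mem_range, not_lt] at hi
      rw [coeff_pow_eq_zero hb (by omega), mul_zero, zero_mul]
  rw [Finset.sum_congr rfl step, Finset.sum_comm]
  apply Finset.sum_congr rfl
  intro i _
  rw [← pcomp_pow hc, coeff_pcomp, Finset.mul_sum]
  apply Finset.sum_congr rfl
  intro k _
  ring

/-- All nonzero coefficients in degrees `≡ r mod ℓ`. -/
def ModC (ℓ r : ℕ) (f : PowerSeries K) : Prop :=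
  ∀ n : ℕ, n % ℓ ≠ r % ℓ → coeff n f = 0

lemma ModC.mul {ℓ r s : ℕ} {a b : PowerSeries K} (ha : ModC ℓ r a) (hb : ModC ℓ s b) :
    ModC ℓ (r + s) (a * b) := by
  intro n hn
  rw [coeff_mul]
  apply Finset.sum_eq_zero
  rintro ⟨i, j⟩ hij
  rw [Finset.HasAntidiagonal.mem_antidiagonal] at hij
  by_cases hi : i % ℓ = r % ℓ
  · by_cases hj : j % ℓ = s % ℓ
    · exfalso
      apply hn
      rw [← hij, Nat.add_mod, hi, hj, ← Nat.add_mod]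
    · rw [hb j hj, mul_zero]
  · rw [ha i hi, zero_mul]

lemma ModC.one {ℓ : ℕ} : ModC ℓ 0 (1 : PowerSeries K) := by
  intro n hn
  rw [coeff_one, if_neg]
  rintro rfl
  simp at hn

lemma ModC.C_ {ℓ : ℕ} (a : K) : ModC ℓ 0 (C a) := by
  intro n hn
  rw [coeff_C, if_neg]
  rintro rfl
  simp at hn

lemma ModC.X_ {ℓ : ℕ} : ModC ℓ 1 (X : PowerSeries K) := by
  intro n hn
  rw [coeff_X, if_neg]
  rintro rfl
  simp at hn

lemma ModC.add {ℓ r : ℕ} {a b : PowerSeries K} (ha : ModC ℓ r a) (hb : ModC ℓ r b) :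
    ModC ℓ r (a + b) := by
  intro n hn
  rw [map_add, ha n hn, hb n hn, add_zero]

lemma ModC.sub {ℓ r : ℕ} {a b : PowerSeries K} (ha : ModC ℓ r a) (hb : ModC ℓ r b) :
    ModC ℓ r (a - b) := by
  intro n hn
  rw [map_sub, ha n hn, hb n hn, sub_zero]

lemma ModC.pow {ℓ : ℕ} {f : PowerSeries K} (hf : ModC ℓ 1 f) (k : ℕ) :
    ModC ℓ k (f ^ k) := by
  induction k with
  | zero => rw [pow_zero]; exact ModC.one
  | succ k ih =>
    rw [pow_succ]
    exact (ih.mul hf)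

lemma ModC.inv {ℓ : ℕ} {g : PowerSeries K} (hg : ModC ℓ 0 g) : ModC ℓ 0 g⁻¹ := by
  intro n
  induction n using Nat.strong_induction_on with
  | _ n IH =>
    intro hn
    have hn0 : n ≠ 0 := by rintro rfl; simp at hn
    rw [PowerSeries.coeff_inv, if_neg hn0]
    rw [show (∑ x ∈ Finset.HasAntidiagonal.antidiagonal n,
        if x.2 < n then coeff x.1 g * coeff x.2 g⁻¹ else 0) = 0 from ?_, mul_zero]
    apply Finset.sum_eq_zero
    rintro ⟨i, j⟩ hij
    rw [Finset.HasAntidiagonal.mem_antidiagonal] at hij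
    by_cases hjn : j < n
    · rw [if_pos hjn]
      by_cases hi : i % ℓ = 0 % ℓ
      · rw [IH j hjn ?_, mul_zero]
        intro hj
        apply hn
        rw [← hij, Nat.add_mod, hi, hj, ← Nat.add_mod]
      · rw [hg i hi, zero_mul]
    · rw [if_neg hjn]

lemma ModC.pdivX_ {ℓ : ℕ} {f : PowerSeries K} (hf : ModC ℓ 1 f) : ModC ℓ 0 (pdivX f) := by
  intro n hn
  rw [coeff_pdivX]
  apply hf
  intro heq
  apply hn
  have hdvd : ℓ ∣ n := (Nat.modEq_iff_dvd' (by omega)).1 heq.symm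
  obtain ⟨c, rfl⟩ := hdvd
  simp [Nat.mul_mod_right]

lemma InTl_iff_ModC {ℓ : ℕ} {g : PowerSeries K} : InTl ℓ g ↔ ModC ℓ 0 g := by
  unfold InTl ModC
  have : ∀ n : ℕ, (¬ ℓ ∣ n) ↔ n % ℓ ≠ 0 % ℓ := by
    intro n
    rw [Nat.zero_mod, Nat.dvd_iff_mod_eq_zero]
  exact ⟨fun h n hn => h n ((this n).2 hn), fun h n hn => h n ((this n).1 hn)⟩

lemma ModC.pcomp_ {ℓ r : ℕ} {g f : PowerSeries K} (hg : ModC ℓ r g) (hf : ModC ℓ 1 f) :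
    ModC ℓ r (pcomp g f) := by
  intro n hn
  rw [coeff_pcomp]
  apply Finset.sum_eq_zero
  intro k _
  by_cases hk : k % ℓ = r % ℓ
  · rw [(hf.pow k) n (by rw [hk]; exact hn), mul_zero]
  · rw [hg k hk, zero_mul]

/-- Coefficients of the compositional inverse. -/
noncomputable def rc (h : PowerSeries K) : ℕ → K
  | 0 => 0
  | 1 => 1
  | n + 2 => - ∑ k ∈ Finset.Icc 2 (n + 2), coeff k h *
      coeff (n + 2) ((PowerSeries.mk fun i => if _ : i < n + 2 then rc h i else 0) ^ k)

/-- The compositional inverse of a power series with `h(0)=0`, `h'(0)=1`. -/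
noncomputable def cinv (h : PowerSeries K) : PowerSeries K := PowerSeries.mk (rc h)

lemma coeff_cinv (h : PowerSeries K) (n : ℕ) : coeff n (cinv h) = rc h n := by
  simp [cinv]

lemma constantCoeff_cinv (h : PowerSeries K) : constantCoeff (cinv h) = 0 := by
  rw [← coeff_zero_eq_constantCoeff, coeff_cinv, rc]

lemma coeff_one_cinv (h : PowerSeries K) : coeff 1 (cinv h) = 1 := by
  rw [coeff_cinv, rc]

/-- Coefficients of `u^k` for `k ≥ 2` only depend on coefficients of `u` below `n`. -/
lemma agree_pow {u v : PowerSeries K} (hu : constantCoeff u = 0)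
    (hv : constantCoeff v = 0) {k : ℕ} (hk : 2 ≤ k) :
    ∀ n : ℕ, (∀ i < n, coeff i u = coeff i v) → coeff n (u ^ k) = coeff n (v ^ k) := by
  induction k, hk using Nat.le_induction with
  | base =>
    intro n hn
    rw [pow_two, pow_two, coeff_mul, coeff_mul]
    apply Finset.sum_congr rfl
    rintro ⟨i, j⟩ hij
    rw [Finset.HasAntidiagonal.mem_antidiagonal] at hij
    rcases Nat.eq_zero_or_pos i with rfl | hi
    · rw [coeff_zero_eq_constantCoeff, hu, hv, zero_mul, zero_mul]
    rcases Nat.eq_zero_or_pos j with rfl | hj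
    · rw [coeff_zero_eq_constantCoeff, hu, hv, mul_zero, mul_zero]
    rw [hn i (by omega), hn j (by omega)]
  | succ k hk2 ih =>
    intro n hn
    rw [pow_succ, pow_succ, coeff_mul, coeff_mul]
    apply Finset.sum_congr rfl
    rintro ⟨i, j⟩ hij
    rw [Finset.HasAntidiagonal.mem_antidiagonal] at hij
    rcases Nat.eq_zero_or_pos j with rfl | hj
    · rw [coeff_zero_eq_constantCoeff, hu, hv, mul_zero, mul_zero]
    rcases Nat.eq_zero_or_pos i with rfl | hi
    · rw [coeff_zero_eq_constantCoeff, constantCoeff_pow_eq_zero hu (by omega),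
        constantCoeff_pow_eq_zero hv (by omega), zero_mul, zero_mul]
    rw [ih i (fun i' hi' => hn i' (by omega)), hn j (by omega)]

lemma rc_succ_eq (h : PowerSeries K) (n : ℕ) :
    rc h (n + 2) = -∑ k ∈ Finset.Icc 2 (n + 2),
      coeff k h * coeff (n + 2) ((cinv h) ^ k) := by
  rw [rc]
  congr 1
  apply Finset.sum_congr rfl
  intro k hk
  rw [Finset.mem_Icc] at hk
  congr 1
  apply agree_pow ?_ (constantCoeff_cinv h) hk.1
  · intro i hi
    rw [coeff_mk, dif_pos hi, coeff_cinv]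
  · rw [← coeff_zero_eq_constantCoeff, coeff_mk, dif_pos (by omega)]
    rw [show rc h 0 = 0 from by rw [rc]]

lemma pcomp_cinv_right {h : PowerSeries K} (h0 : constantCoeff h = 0)
    (h1 : coeff 1 h = 1) : pcomp h (cinv h) = X := by
  ext n
  rw [coeff_pcomp, coeff_X]
  rcases n with _ | _ | n
  · rw [if_neg (by omega)]
    rw [Finset.sum_range_one, pow_zero]
    rw [coeff_zero_eq_constantCoeff] at *
    rw [h0, zero_mul]
  · rw [if_pos rfl]
    rw [Finset.sum_range_succ, Finset.sum_range_one]
    rw [pow_zero, pow_one, coeff_one, if_neg (by omega), mul_zero, zero_add, h1,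
      coeff_one_cinv, one_mul]
  · rw [if_neg (by omega)]
    have hsplit : Finset.range (n + 2 + 1) = insert 0 (insert 1 (Finset.Icc 2 (n + 2))) := by
      ext k
      simp only [Finset.mem_range, Finset.mem_insert, Finset.mem_Icc]
      omega
    rw [hsplit, Finset.sum_insert (by simp), Finset.sum_insert (by simp)]
    rw [coeff_zero_eq_constantCoeff] at *
    rw [h0, zero_mul, zero_add, h1, pow_one, coeff_cinv, rc_succ_eq]
    ring

lemma cinv_spec {h : PowerSeries K} (h0 : constantCoeff h = 0)
    (h1 : coeff 1 h = 1) : pcomp h (cinv h) = X ∧ pcomp (cinv h) h = X := by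
  refine ⟨pcomp_cinv_right h0 h1, ?_⟩
  set u := cinv h with hu
  have hu0 : constantCoeff u = 0 := constantCoeff_cinv h
  have hu1 : coeff 1 u = 1 := coeff_one_cinv h
  set w := cinv u with hw
  have hw0 : constantCoeff w = 0 := constantCoeff_cinv u
  have huw : pcomp u w = X := pcomp_cinv_right hu0 hu1
  have hhw : h = w := by
    calc h = pcomp h X := (pcomp_X h).symm
    _ = pcomp h (pcomp u w) := by rw [huw]
    _ = pcomp (pcomp h u) w := (pcomp_assoc hu0 hw0).symm
    _ = pcomp X w := by rw [pcomp_cinv_right h0 h1]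
    _ = w := X_pcomp hw0
  rw [show pcomp u h = pcomp u w from by rw [← hhw]]
  exact huw

lemma ModC_cinv {ℓ : ℕ} {h : PowerSeries K} (hh : ModC ℓ 1 h) : ModC ℓ 1 (cinv h) := by
  intro N
  induction N using Nat.strong_induction_on with
  | _ N IH =>
    intro hN
    rw [coeff_cinv]
    rcases N with _ | _ | n
    · rw [rc]
    · exact absurd rfl hN
    · rw [rc, neg_eq_zero]
      apply Finset.sum_eq_zero
      intro k hk
      rw [Finset.mem_Icc] at hk
      set T : PowerSeries K :=
        PowerSeries.mk fun i => if _ : i < n + 2 then rc h i else 0 with hT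
      have hTm : ModC ℓ 1 T := by
        intro i hi
        rw [hT, coeff_mk]
        split
        · rw [show rc h i = coeff i (cinv h) from (coeff_cinv h i).symm]
          exact IH i (by omega) hi
        · rfl
      by_cases hk1 : k % ℓ = 1 % ℓ
      · rw [(hTm.pow k) (n + 2) (by rw [hk1]; exact hN), mul_zero]
      · rw [hh k hk1, zero_mul]

end AuxLemmas

section GroupLemmas

variable {K : Type*} [Field K] {m : ℕ}

lemma isMultN_X {ℓ : ℕ} : IsMultN ℓ (X : PowerSeries K) :=
  ⟨constantCoeff_X, fun n hn => ModC.X_ n hn, coeff_one_X⟩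

lemma prod_X_fin : (X : PowerSeries K) ^ (m + 1) = ∏ _j : Fin (m + 1), (X : PowerSeries K) := by
  rw [Finset.prod_const, Finset.card_univ, Fintype.card_fin]

lemma pdivX_mul_right {A f : PowerSeries K} (h0 : constantCoeff f = 0) :
    pdivX (A * f) = A * pdivX f := by
  have : A * f = X * (A * pdivX f) := by rw [mul_left_comm, X_mul_pdivX h0]
  rw [this, pdivX_X_mul]

lemma prod_pdivX_eq {f : Fin (m + 1) → PowerSeries K} {h : PowerSeries K}
    (hf0 : ∀ j, constantCoeff (f j) = 0) (hh0 : constantCoeff h = 0)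
    (hroot : h ^ (m + 1) = ∏ j, f j) :
    (pdivX h) ^ (m + 1) = ∏ j, pdivX (f j) := by
  have hX : (X : PowerSeries K) ^ (m + 1) ≠ 0 := pow_ne_zero _ X_ne_zero
  apply mul_left_cancel₀ hX
  calc X ^ (m + 1) * (pdivX h) ^ (m + 1) = (X * pdivX h) ^ (m + 1) := (mul_pow _ _ _).symm
  _ = h ^ (m + 1) := by rw [X_mul_pdivX hh0]
  _ = ∏ j, f j := hroot
  _ = ∏ j, (X * pdivX (f j)) := Finset.prod_congr rfl fun j _ => (X_mul_pdivX (hf0 j)).symm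
  _ = (∏ _j : Fin (m + 1), (X : PowerSeries K)) * ∏ j, pdivX (f j) := Finset.prod_mul_distrib
  _ = X ^ (m + 1) * ∏ j, pdivX (f j) := by rw [← prod_X_fin]

lemma IsMaRN.maMul_ {p q : MaR K m} (hp : IsMaRN m p) (hq : IsMaRN m q) :
    IsMaRN m (maMul p q) := by
  obtain ⟨hb, hb0, hg, hg0, hf, hh, hroot⟩ := hp
  obtain ⟨hc, hc0, hd, hd0, hk, hu, hqroot⟩ := hq
  have hb' : ModC (m + 1) 0 p.1 := InTl_iff_ModC.1 hb
  have hg' : ModC (m + 1) 0 p.2.1 := InTl_iff_ModC.1 hg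
  have hc' : ModC (m + 1) 0 q.1 := InTl_iff_ModC.1 hc
  have hd' : ModC (m + 1) 0 q.2.1 := InTl_iff_ModC.1 hd
  have hh0 : constantCoeff p.2.2.2 = 0 := hh.1
  have hhm : ModC (m + 1) 1 p.2.2.2 := hh.2.1
  have hh1 : coeff 1 p.2.2.2 = 1 := hh.2.2
  have hum : ModC (m + 1) 1 q.2.2.2 := hu.2.1
  have hfm : ∀ j, ModC (m + 1) 1 (p.2.2.1 j) := fun j => (hf j).2.1
  have hkm : ∀ j, ModC (m + 1) 1 (q.2.2.1 j) := fun j => (hk j).2.1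
  have hpdhne : constantCoeff (pdivX p.2.2.2) ≠ 0 := by
    rw [constantCoeff_pdivX, hh1]; exact one_ne_zero
  refine ⟨?_, ?_, ?_, ?_, ?_, ⟨?_, ?_, ?_⟩, ?_⟩
  · -- InTl of first component
    rw [InTl_iff_ModC]
    exact ((ModC.C_ _).mul hb').add
      ((hg'.mul (ModC.pdivX_ (hfm (Fin.last m))).inv).mul
        ((hc'.pcomp_ hhm).sub (ModC.C_ _)))
  · -- constant coeff of first component
    show constantCoeff (C (constantCoeff q.1) * p.1 +
      p.2.1 * (pdivX (p.2.2.1 (Fin.last m)))⁻¹ *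
        (pcomp q.1 p.2.2.2 - C (constantCoeff q.1))) = 1
    rw [map_add, map_mul, map_mul, map_mul, map_sub, constantCoeff_C,
      constantCoeff_pcomp, hb0, hc0, hg0]
    norm_num
  · rw [InTl_iff_ModC]
    exact hg'.mul (hd'.pcomp_ hhm)
  · show constantCoeff (p.2.1 * pcomp q.2.1 p.2.2.2) = 1
    rw [map_mul, constantCoeff_pcomp, hg0, hd0, one_mul]
  · -- the multipliers are normalized
    intro j
    refine ⟨?_, ?_, ?_⟩
    · show constantCoeff (pdivX (p.2.2.1 j) * (pdivX p.2.2.2)⁻¹ *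
        pcomp (q.2.2.1 j) p.2.2.2) = 0
      rw [map_mul, constantCoeff_pcomp, (hk j).1, mul_zero]
    · exact fun n hn =>
        (((ModC.pdivX_ (hfm j)).mul (ModC.pdivX_ hhm).inv).mul
          ((hkm j).pcomp_ hhm)) n hn
    · show coeff 1 (pdivX (p.2.2.1 j) * (pdivX p.2.2.2)⁻¹ *
        pcomp (q.2.2.1 j) p.2.2.2) = 1
      rw [coeff_one_mul', constantCoeff_pcomp, (hk j).1, mul_zero, add_zero,
        coeff_one_pcomp hh0, (hk j).2.2, hh1, map_mul,
        constantCoeff_inv, constantCoeff_pdivX, constantCoeff_pdivX, hh1,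
        (hf j).2.2]
      norm_num
  · show constantCoeff (pcomp q.2.2.2 p.2.2.2) = 0
    rw [constantCoeff_pcomp, hu.1]
  · exact fun n hn => (hum.pcomp_ hhm) n hn
  · show coeff 1 (pcomp q.2.2.2 p.2.2.2) = 1
    rw [coeff_one_pcomp hh0, hu.2.2, hh1, one_mul]
  · -- the root condition
    show (pcomp q.2.2.2 p.2.2.2) ^ (m + 1) =
      ∏ j, pdivX (p.2.2.1 j) * (pdivX p.2.2.2)⁻¹ * pcomp (q.2.2.1 j) p.2.2.2
    have hf0 : ∀ j, constantCoeff (p.2.2.1 j) = 0 := fun j => (hf j).1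
    have hcan : pdivX p.2.2.2 * (pdivX p.2.2.2)⁻¹ = 1 :=
      PowerSeries.mul_inv_cancel _ hpdhne
    calc (pcomp q.2.2.2 p.2.2.2) ^ (m + 1)
        = pcomp (q.2.2.2 ^ (m + 1)) p.2.2.2 := (pcomp_pow hh0 _ _).symm
      _ = pcomp (∏ j, q.2.2.1 j) p.2.2.2 := by rw [hqroot]
      _ = ∏ j, pcomp (q.2.2.1 j) p.2.2.2 := pcomp_prod hh0 _ _
      _ = 1 * ∏ j, pcomp (q.2.2.1 j) p.2.2.2 := (one_mul _).symm
      _ = (pdivX p.2.2.2 * (pdivX p.2.2.2)⁻¹) ^ (m + 1) *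
            ∏ j, pcomp (q.2.2.1 j) p.2.2.2 := by rw [hcan, one_pow]
      _ = ((∏ j, pdivX (p.2.2.1 j)) * ((pdivX p.2.2.2)⁻¹) ^ (m + 1)) *
            ∏ j, pcomp (q.2.2.1 j) p.2.2.2 := by
          rw [mul_pow, prod_pdivX_eq hf0 hh0 hroot]
      _ = ((∏ j, pdivX (p.2.2.1 j)) * (∏ _j : Fin (m + 1), (pdivX p.2.2.2)⁻¹)) *
            ∏ j, pcomp (q.2.2.1 j) p.2.2.2 := by
          rw [Finset.prod_const, Finset.card_univ, Fintype.card_fin]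
      _ = (∏ j, pdivX (p.2.2.1 j) * (pdivX p.2.2.2)⁻¹) *
            ∏ j, pcomp (q.2.2.1 j) p.2.2.2 := by rw [← Finset.prod_mul_distrib]
      _ = ∏ j, pdivX (p.2.2.1 j) * (pdivX p.2.2.2)⁻¹ * pcomp (q.2.2.1 j) p.2.2.2 := by
          rw [← Finset.prod_mul_distrib]

lemma isMaRN_one : IsMaRN m ((1, 1, fun _ => X, X) : MaR K m) :=
  ⟨InTl_iff_ModC.2 ModC.one, map_one _, InTl_iff_ModC.2 ModC.one, map_one _,
    fun _ => isMultN_X, isMultN_X, prod_X_fin⟩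

end GroupLemmas

section MainParts

variable {K : Type*} [Field K] {m : ℕ}

lemma partA_mul {p q : MaR K m} (hp : IsA m p) (hq : IsA m q) : IsA m (maMul p q) := by
  refine ⟨hp.1.maMul_ hq.1, ?_, ?_⟩
  · intro j
    show pdivX (p.2.2.1 j) * (pdivX p.2.2.2)⁻¹ * pcomp (q.2.2.1 j) p.2.2.2 = X
    rw [hp.2.1 j, hp.2.2, hq.2.1 j, pdivX_X, inv_one, mul_one, one_mul, pcomp_X]
  · show pcomp q.2.2.2 p.2.2.2 = X
    rw [hp.2.2, hq.2.2, pcomp_X]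

lemma partA_one : IsA m ((1, 1, fun _ => X, X) : MaR K m) :=
  ⟨isMaRN_one, fun _ => rfl, rfl⟩

lemma partA_inv {p : MaR K m} (hp : IsA m p) :
    ∃ q, IsA m q ∧ maMul p q = ((1, 1, fun _ => X, X) : MaR K m) ∧
      maMul q p = ((1, 1, fun _ => X, X) : MaR K m) := by
  obtain ⟨b, g, f, h⟩ := p
  obtain ⟨⟨hb, hb0, hg, hg0, -, -, -⟩, hfX, hhX⟩ := hp
  replace hb0 : constantCoeff b = 1 := hb0
  replace hg0 : constantCoeff g = 1 := hg0
  replace hb : InTl (m + 1) b := hb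
  replace hg : InTl (m + 1) g := hg
  have hfX' : f = fun _ => X := funext fun j => hfX j
  replace hhX : h = X := hhX
  subst hfX' hhX
  have hgne : constantCoeff g ≠ 0 := by rw [hg0]; exact one_ne_zero
  have hc0 : constantCoeff (1 + g⁻¹ * (1 - b)) = 1 := by
    rw [map_add, map_one, map_mul, map_sub, map_one, constantCoeff_inv, hg0, hb0]
    norm_num
  refine ⟨(1 + g⁻¹ * (1 - b), g⁻¹, fun _ => X, X),
    ⟨⟨?_, hc0, ?_, ?_, fun _ => isMultN_X, isMultN_X, prod_X_fin⟩, fun _ => rfl, rfl⟩,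
    ?_, ?_⟩
  · rw [InTl_iff_ModC]
    exact ModC.one.add ((InTl_iff_ModC.1 hg).inv.mul (ModC.one.sub (InTl_iff_ModC.1 hb)))
  · rw [InTl_iff_ModC]; exact (InTl_iff_ModC.1 hg).inv
  · rw [constantCoeff_inv, hg0, inv_one]
  · show (C (constantCoeff (1 + g⁻¹ * (1 - b))) * b +
        g * (pdivX X)⁻¹ * (pcomp (1 + g⁻¹ * (1 - b)) X - C (constantCoeff (1 + g⁻¹ * (1 - b)))),
      g * pcomp g⁻¹ X,
      fun j => pdivX X * (pdivX X)⁻¹ * pcomp X X,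
      pcomp X X) = ((1, 1, fun _ => X, X) : MaR K m)
    simp only [Prod.mk.injEq]
    refine ⟨?_, ?_, ?_, pcomp_X X⟩
    · rw [hc0, map_one, pcomp_X, pdivX_X, inv_one, mul_one, one_mul, add_sub_cancel_left,
        ← mul_assoc, PowerSeries.mul_inv_cancel _ hgne, one_mul]
      ring
    · rw [pcomp_X, PowerSeries.mul_inv_cancel _ hgne]
    · funext j; rw [pdivX_X, inv_one, mul_one, one_mul, pcomp_X]
  · show (C (constantCoeff b) * (1 + g⁻¹ * (1 - b)) +
        g⁻¹ * (pdivX X)⁻¹ * (pcomp b X - C (constantCoeff b)),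
      g⁻¹ * pcomp g X,
      fun j => pdivX X * (pdivX X)⁻¹ * pcomp X X,
      pcomp X X) = ((1, 1, fun _ => X, X) : MaR K m)
    simp only [Prod.mk.injEq]
    refine ⟨?_, ?_, ?_, pcomp_X X⟩
    · rw [hb0, map_one, pcomp_X, pdivX_X, inv_one, mul_one, one_mul]
      ring
    · rw [pcomp_X, PowerSeries.inv_mul_cancel _ hgne]
    · funext j; rw [pdivX_X, inv_one, mul_one, one_mul, pcomp_X]

lemma partNormal {p a q : MaR K m} (hp : IsMaRN m p) (ha : IsA m a) (hq : IsMaRN m q)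
    (hpq : maMul p q = ((1, 1, fun _ => X, X) : MaR K m))
    (hqp : maMul q p = ((1, 1, fun _ => X, X) : MaR K m)) :
    IsA m (maMul (maMul p a) q) := by
  refine ⟨(hp.maMul_ ha.1).maMul_ hq, ?_, ?_⟩
  · intro j
    have hh : IsMultN (m + 1) p.2.2.2 := hp.2.2.2.2.2.1
    have hh0 : constantCoeff p.2.2.2 = 0 := hh.1
    have hpdhne : constantCoeff (pdivX p.2.2.2) ≠ 0 := by
      rw [constantCoeff_pdivX, hh.2.2]; exact one_ne_zero
    have hm1 : pdivX (p.2.2.1 j) * (pdivX p.2.2.2)⁻¹ * pcomp (q.2.2.1 j) p.2.2.2 = X :=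
      congrFun (congrArg (fun t : MaR K m => t.2.2.1) hpq) j
    show pdivX (pdivX (p.2.2.1 j) * (pdivX p.2.2.2)⁻¹ * pcomp (a.2.2.1 j) p.2.2.2) *
        (pdivX (pcomp a.2.2.2 p.2.2.2))⁻¹ *
        pcomp (q.2.2.1 j) (pcomp a.2.2.2 p.2.2.2) = X
    rw [ha.2.1 j, ha.2.2, X_pcomp hh0, pdivX_mul_right hh0]
    have hcan : pdivX p.2.2.2 * (pdivX p.2.2.2)⁻¹ = 1 :=
      PowerSeries.mul_inv_cancel _ hpdhne
    calc pdivX (p.2.2.1 j) * (pdivX p.2.2.2)⁻¹ * pdivX p.2.2.2 * (pdivX p.2.2.2)⁻¹ *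
          pcomp (q.2.2.1 j) p.2.2.2
        = (pdivX p.2.2.2 * (pdivX p.2.2.2)⁻¹) *
            (pdivX (p.2.2.1 j) * (pdivX p.2.2.2)⁻¹ * pcomp (q.2.2.1 j) p.2.2.2) := by
          ring
      _ = X := by rw [hcan, hm1, one_mul]
  · have hh0 : constantCoeff p.2.2.2 = 0 := hp.2.2.2.2.2.1.1
    have hm2 : pcomp q.2.2.2 p.2.2.2 = X :=
      congrArg (fun t : MaR K m => t.2.2.2) hpq
    show pcomp q.2.2.2 (pcomp a.2.2.2 p.2.2.2) = X
    rw [ha.2.2, X_pcomp hh0]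
    exact hm2

lemma partL_mul {p q : MaR K m} (hp : IsL m p) (hq : IsL m q) : IsL m (maMul p q) := by
  refine ⟨hp.1.maMul_ hq.1, ?_, ?_⟩
  · show C (constantCoeff q.1) * p.1 + p.2.1 * (pdivX (p.2.2.1 (Fin.last m)))⁻¹ *
      (pcomp q.1 p.2.2.2 - C (constantCoeff q.1)) = 1
    rw [hp.2.1, hp.2.2, hq.2.1, one_pcomp, map_one, map_one, mul_one, sub_self,
      mul_zero, add_zero]
  · show p.2.1 * pcomp q.2.1 p.2.2.2 = 1
    rw [hp.2.2, hq.2.2, one_pcomp, one_mul]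

lemma partL_one : IsL m ((1, 1, fun _ => X, X) : MaR K m) :=
  ⟨isMaRN_one, rfl, rfl⟩

lemma partL_inv {p : MaR K m} (hp : IsL m p) :
    ∃ q, IsL m q ∧ maMul p q = ((1, 1, fun _ => X, X) : MaR K m) ∧
      maMul q p = ((1, 1, fun _ => X, X) : MaR K m) := by
  obtain ⟨b, g, f, h⟩ := p
  obtain ⟨hpN, hb1, hg1⟩ := hp
  replace hb1 : b = 1 := hb1
  replace hg1 : g = 1 := hg1
  subst hb1 hg1
  obtain ⟨-, -, -, -, hf, hh, hroot⟩ := hpN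
  replace hroot : h ^ (m + 1) = ∏ j, f j := hroot
  replace hf : ∀ j, IsMultN (m + 1) (f j) := hf
  replace hh : IsMultN (m + 1) h := hh
  have hh0 : constantCoeff h = 0 := hh.1
  have hhm : ModC (m + 1) 1 h := hh.2.1
  have hh1 : coeff 1 h = 1 := hh.2.2
  have hfm : ∀ j, ModC (m + 1) 1 (f j) := fun j => (hf j).2.1
  have hf0 : ∀ j, constantCoeff (f j) = 0 := fun j => (hf j).1
  have hpdf0 : ∀ j, constantCoeff (pdivX (f j)) = 1 := fun j => by
    rw [constantCoeff_pdivX, (hf j).2.2]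
  have hpdfne : ∀ j, constantCoeff (pdivX (f j)) ≠ 0 := fun j => by
    rw [hpdf0 j]; exact one_ne_zero
  have hpdhne : constantCoeff (pdivX h) ≠ 0 := by
    rw [constantCoeff_pdivX, hh1]; exact one_ne_zero
  have hu0 : constantCoeff (cinv h) = 0 := constantCoeff_cinv h
  have hu1 : coeff 1 (cinv h) = 1 := coeff_one_cinv h
  have hum : ModC (m + 1) 1 (cinv h) := ModC_cinv hhm
  obtain ⟨hhu, huh⟩ := cinv_spec hh0 hh1
  set u : PowerSeries K := cinv h with hudef
  set k : Fin (m + 1) → PowerSeries K :=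
    fun j => pcomp (h * (pdivX (f j))⁻¹) u with hkdef
  have hkj : ∀ j, k j = pcomp (h * (pdivX (f j))⁻¹) u := fun _ => rfl
  have hprodpd : (pdivX h) ^ (m + 1) = ∏ j, pdivX (f j) := prod_pdivX_eq hf0 hh0 hroot
  have hXl : h ^ (m + 1) * ∏ j, (pdivX (f j))⁻¹ = X ^ (m + 1) := by
    have h1 : h ^ (m + 1) = X ^ (m + 1) * ∏ j, pdivX (f j) := by
      rw [← hprodpd, ← mul_pow, X_mul_pdivX hh0]
    rw [h1, mul_assoc, ← Finset.prod_mul_distrib,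
      Finset.prod_congr rfl fun j _ => PowerSeries.mul_inv_cancel _ (hpdfne j),
      Finset.prod_const_one, mul_one]
  have hkroot : u ^ (m + 1) = ∏ j, k j := by
    calc u ^ (m + 1) = (pcomp X u) ^ (m + 1) := by rw [X_pcomp hu0]
    _ = pcomp (X ^ (m + 1)) u := (pcomp_pow hu0 X (m + 1)).symm
    _ = pcomp (h ^ (m + 1) * ∏ j, (pdivX (f j))⁻¹) u := by rw [hXl]
    _ = pcomp (∏ j, (h * (pdivX (f j))⁻¹)) u := by
        rw [Finset.prod_mul_distrib, Finset.prod_const, Finset.card_univ, Fintype.card_fin]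
    _ = ∏ j, k j := pcomp_prod hu0 _ _
  have hk0 : ∀ j, constantCoeff (k j) = 0 := fun j => by
    rw [hkj j, constantCoeff_pcomp, map_mul, hh0, zero_mul]
  have hkMult : ∀ j, IsMultN (m + 1) (k j) := by
    intro j
    refine ⟨hk0 j, ?_, ?_⟩
    · exact fun n hn => ((hhm.mul (ModC.pdivX_ (hfm j)).inv).pcomp_ hum) n hn
    · rw [hkj j, coeff_one_pcomp hu0, coeff_one_mul', hh0, zero_mul, zero_add, hh1,
        constantCoeff_inv, hpdf0 j, inv_one, one_mul, hu1, mul_one]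
  refine ⟨(1, 1, k, u),
    ⟨⟨InTl_iff_ModC.2 ModC.one, map_one _, InTl_iff_ModC.2 ModC.one, map_one _,
      hkMult, ⟨hu0, fun n hn => hum n hn, hu1⟩, hkroot⟩, rfl, rfl⟩, ?_, ?_⟩
  · show (C (constantCoeff (1 : PowerSeries K)) * 1 +
        1 * (pdivX (f (Fin.last m)))⁻¹ *
          (pcomp 1 h - C (constantCoeff (1 : PowerSeries K))),
      1 * pcomp 1 h,
      fun j => pdivX (f j) * (pdivX h)⁻¹ * pcomp (k j) h,
      pcomp u h) = ((1, 1, fun _ => X, X) : MaR K m)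
    simp only [Prod.mk.injEq]
    refine ⟨?_, ?_, ?_, huh⟩
    · rw [one_pcomp, map_one, map_one, mul_one, sub_self, mul_zero, add_zero]
    · rw [one_pcomp, one_mul]
    · funext j
      have hkh : pcomp (k j) h = h * (pdivX (f j))⁻¹ := by
        rw [hkj j, pcomp_assoc hu0 hh0, huh, pcomp_X]
      rw [hkh]
      have hcan : pdivX h * (pdivX h)⁻¹ = 1 := PowerSeries.mul_inv_cancel _ hpdhne
      have hcanf : pdivX (f j) * (pdivX (f j))⁻¹ = 1 :=
        PowerSeries.mul_inv_cancel _ (hpdfne j)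
      calc pdivX (f j) * (pdivX h)⁻¹ * (h * (pdivX (f j))⁻¹)
          = pdivX (f j) * (pdivX h)⁻¹ * ((X * pdivX h) * (pdivX (f j))⁻¹) := by
            rw [X_mul_pdivX hh0]
        _ = X * (pdivX (f j) * (pdivX (f j))⁻¹) * (pdivX h * (pdivX h)⁻¹) := by ring
        _ = X := by rw [hcanf, hcan, mul_one, mul_one]
  · show (C (constantCoeff (1 : PowerSeries K)) * 1 +
        1 * (pdivX (k (Fin.last m)))⁻¹ *
          (pcomp 1 u - C (constantCoeff (1 : PowerSeries K))),
      1 * pcomp 1 u,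
      fun j => pdivX (k j) * (pdivX u)⁻¹ * pcomp (f j) u,
      pcomp h u) = ((1, 1, fun _ => X, X) : MaR K m)
    simp only [Prod.mk.injEq]
    refine ⟨?_, ?_, ?_, hhu⟩
    · rw [one_pcomp, map_one, map_one, mul_one, sub_self, mul_zero, add_zero]
    · rw [one_pcomp, one_mul]
    · funext j
      have hP0 : constantCoeff (pcomp (pdivX (f j)) u) ≠ 0 := by
        rw [constantCoeff_pcomp, hpdf0 j]; exact one_ne_zero
    
      have hkjX : k j = X * pcomp (pdivX (f j))⁻¹ u := by
        rw [hkj j, pcomp_mul hu0, hhu]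
      have hpdk : pdivX (k j) = (pcomp (pdivX (f j)) u)⁻¹ := by
        rw [hkjX, pdivX_X_mul, pcomp_inv hu0 (hpdfne j)]
      have hfju : pcomp (f j) u = u * pcomp (pdivX (f j)) u := by
        conv_lhs => rw [← X_mul_pdivX (hf0 j)]
        rw [pcomp_mul hu0, X_pcomp hu0]
      have hpdune : constantCoeff (pdivX u) ≠ 0 := by
        rw [constantCoeff_pdivX, hu1]; exact one_ne_zero
      rw [hpdk, hfju]
      have hcanP : pcomp (pdivX (f j)) u * (pcomp (pdivX (f j)) u)⁻¹ = 1 :=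
        PowerSeries.mul_inv_cancel _ hP0
      have hcanu : pdivX u * (pdivX u)⁻¹ = 1 := PowerSeries.mul_inv_cancel _ hpdune
      calc (pcomp (pdivX (f j)) u)⁻¹ * (pdivX u)⁻¹ * (u * pcomp (pdivX (f j)) u)
          = (pcomp (pdivX (f j)) u)⁻¹ * (pdivX u)⁻¹ *
              ((X * pdivX u) * pcomp (pdivX (f j)) u) := by rw [X_mul_pdivX hu0]
        _ = X * (pcomp (pdivX (f j)) u * (pcomp (pdivX (f j)) u)⁻¹) *
              (pdivX u * (pdivX u)⁻¹) := by ring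
        _ = X := by rw [hcanP, hcanu, mul_one, mul_one]

lemma partFact {p : MaR K m} (hp : IsMaRN m p) :
    ∃! al : MaR K m × MaR K m,
      IsA m al.1 ∧ IsL m al.2 ∧ p = maMul al.1 al.2 := by
  obtain ⟨b, g, f, h⟩ := p
  obtain ⟨hb, hb0, hg, hg0, hf, hh, hroot⟩ := hp
  refine ⟨((b, g, fun _ => X, X), (1, 1, f, h)), ⟨?_, ?_, ?_⟩, ?_⟩
  · exact ⟨⟨hb, hb0, hg, hg0, fun _ => isMultN_X, isMultN_X, prod_X_fin⟩,
      fun _ => rfl, rfl⟩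
  · exact ⟨⟨InTl_iff_ModC.2 ModC.one, map_one _, InTl_iff_ModC.2 ModC.one, map_one _,
      hf, hh, hroot⟩, rfl, rfl⟩
  · show (b, g, f, h) =
      (C (constantCoeff (1 : PowerSeries K)) * b +
        g * (pdivX X)⁻¹ * (pcomp 1 X - C (constantCoeff (1 : PowerSeries K))),
      g * pcomp 1 X,
      fun j => pdivX X * (pdivX X)⁻¹ * pcomp (f j) X,
      pcomp h X)
    simp only [Prod.mk.injEq]
    refine ⟨?_, ?_, ?_, (pcomp_X h).symm⟩
    · rw [one_pcomp, map_one, map_one, sub_self, mul_zero, add_zero, one_mul]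
    · rw [one_pcomp, mul_one]
    · funext j; rw [pdivX_X, inv_one, mul_one, one_mul, pcomp_X]
  · rintro ⟨a, l⟩ ⟨haa, hll, heq⟩
    obtain ⟨a1, a2, a3, a4⟩ := a
    obtain ⟨l1, l2, l3, l4⟩ := l
    have ha3 : a3 = fun _ => X := funext fun j => haa.2.1 j
    have ha4 : a4 = X := haa.2.2
    have hl1 : l1 = 1 := hll.2.1
    have hl2 : l2 = 1 := hll.2.2
    subst ha3 ha4 hl1 hl2
    have hsimp : maMul ((a1, a2, fun _ => X, X) : MaR K m) ((1, 1, l3, l4) : MaR K m) =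
        ((a1, a2, l3, l4) : MaR K m) := by
      show (C (constantCoeff (1 : PowerSeries K)) * a1 +
          a2 * (pdivX X)⁻¹ * (pcomp 1 X - C (constantCoeff (1 : PowerSeries K))),
        a2 * pcomp 1 X,
        fun j => pdivX X * (pdivX X)⁻¹ * pcomp (l3 j) X,
        pcomp l4 X) = ((a1, a2, l3, l4) : MaR K m)
      simp only [Prod.mk.injEq]
      refine ⟨?_, ?_, ?_, pcomp_X l4⟩
      · rw [one_pcomp, map_one, map_one, sub_self, mul_zero, add_zero, one_mul]
      · rw [one_pcomp, mul_one]
      · funext j; rw [pdivX_X, inv_one, mul_one, one_mul, pcomp_X]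
    rw [hsimp] at heq
    rw [Prod.mk.injEq, Prod.mk.injEq, Prod.mk.injEq] at heq
    obtain ⟨h1, h2, h3, h4⟩ := heq
    subst h1; subst h2; subst h3; subst h4
    rfl

lemma partTriv {p : MaR K m} (hA : IsA m p) (hL : IsL m p) :
    p = ((1, 1, fun _ => X, X) : MaR K m) := by
  obtain ⟨b, g, f, h⟩ := p
  simp only [Prod.mk.injEq]
  exact ⟨hL.2.1, hL.2.2, funext fun j => hA.2.1 j, hA.2.2⟩

end MainParts

/-- The Appell subgroup `A` is a normal subgroup of the multiple almost-Riordan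
group, the Lagrange subgroup `L` is a subgroup, and the multiple almost-Riordan
group is the internal semidirect product `A ⋊ L`: every element factors uniquely
as an element of `A` times an element of `L`, and `A ∩ L` is trivial. -/
theorem multiple_almost_riordan_semidirect {K : Type*} [Field K] [CharZero K] (m : ℕ) :
    (∀ p q : MaR K m, IsA m p → IsA m q → IsA m (maMul p q)) ∧
    IsA m ((1, 1, fun _ => X, X) : MaR K m) ∧
    (∀ p : MaR K m, IsA m p → ∃ q, IsA m q ∧ maMul p q = (1, 1, fun _ => X, X) ∧
      maMul q p = ((1, 1, fun _ => X, X) : MaR K m)) ∧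
    (∀ p a q : MaR K m, IsMaRN m p → IsA m a → IsMaRN m q →
      maMul p q = (1, 1, fun _ => X, X) → maMul q p = (1, 1, fun _ => X, X) →
      IsA m (maMul (maMul p a) q)) ∧
    (∀ p q : MaR K m, IsL m p → IsL m q → IsL m (maMul p q)) ∧
    IsL m ((1, 1, fun _ => X, X) : MaR K m) ∧
    (∀ p : MaR K m, IsL m p → ∃ q, IsL m q ∧ maMul p q = (1, 1, fun _ => X, X) ∧
      maMul q p = ((1, 1, fun _ => X, X) : MaR K m)) ∧
    (∀ p : MaR K m, IsMaRN m p →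
      ∃! al : MaR K m × MaR K m,
        IsA m al.1 ∧ IsL m al.2 ∧ p = maMul al.1 al.2) ∧
    (∀ p : MaR K m, IsA m p → IsL m p →
      p = ((1, 1, fun _ => X, X) : MaR K m)) := by
  exact ⟨fun p q hp hq => partA_mul hp hq, partA_one,
    fun p hp => partA_inv hp,
    fun p a q hp ha hq hpq hqp => partNormal hp ha hq hpq hqp,
    fun p q hp hq => partL_mul hp hq, partL_one,
    fun p hp => partL_inv hp,
    fun p hp => partFact hp,
    fun p hA hL => partTriv hA hL⟩
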